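/- Let h be a positive definite quadratic form on ℝⁿ (n ≥ 2) with norm ‖·‖_h, let W ∈ ℝⁿ, and let α² be another positive definite quadratic form with associated linear form β(y) = ⟨b, y⟩_α, b ≠ 0. If h(y)·β(y)² - 2⟨W, y⟩_h·β(y)·α²(y) + (‖W‖_h² - 1)·α²(y)² = 0 for all y, and moreover h = e^{2ρ}·α² for some constant ρ, then ‖W‖_h = 1 and 2⟨W, y⟩_h = e^{2ρ}·β(y) for all y. -/

import Mathlib

private def Lf (n : ℕ) (M : Matrix (Fin n) (Fin n) ℝ) (b y : Fin n → ℝ) : ℝ :=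
  ∑ i, ∑ j, b i * M i j * y j

private def Qf (n : ℕ) (M : Matrix (Fin n) (Fin n) ℝ) (y : Fin n → ℝ) : ℝ :=
  ∑ i, ∑ j, M i j * y i * y j

private lemma Lf_add (n : ℕ) (M : Matrix (Fin n) (Fin n) ℝ) (b y z : Fin n → ℝ) :
    Lf n M b (y + z) = Lf n M b y + Lf n M b z := by
  simp [Lf, mul_add, Finset.sum_add_distrib]

private lemma Lf_zero (n : ℕ) (M : Matrix (Fin n) (Fin n) ℝ) (b : Fin n → ℝ) :
    Lf n M b 0 = 0 := by
  simp [Lf]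

private lemma Qf_pos (n : ℕ) (M : Matrix (Fin n) (Fin n) ℝ) (hM : M.PosDef)
    {y : Fin n → ℝ} (hy : y ≠ 0) : 0 < Qf n M y := by
  have h := hM.dotProduct_mulVec_pos hy
  have heq : dotProduct (star y) (M.mulVec y) = Qf n M y := by
    simp only [dotProduct, Matrix.mulVec, star_trivial, Pi.star_apply, Qf,
      Finset.mul_sum]
    exact Finset.sum_congr rfl fun i _ => Finset.sum_congr rfl fun j _ => by ring
  rwa [heq] at h

private lemma Lf_self (n : ℕ) (M : Matrix (Fin n) (Fin n) ℝ) (b : Fin n → ℝ) :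
    Lf n M b b = Qf n M b := by
  exact Finset.sum_congr rfl fun i _ => Finset.sum_congr rfl fun j _ => by ring

theorem stmt2 (n : ℕ) (hn : 2 ≤ n) (A H : Matrix (Fin n) (Fin n) ℝ)
    (hA : A.PosDef) (hH : H.PosDef) (W b : Fin n → ℝ) (hb : b ≠ 0) (ρ : ℝ)
    (hconf : ∀ i j, H i j = Real.exp (2 * ρ) * A i j)
    (key : ∀ y : Fin n → ℝ,
      (∑ i, ∑ j, H i j * y i * y j) * (∑ i, ∑ j, b i * A i j * y j) ^ 2
        - 2 * (∑ i, ∑ j, W i * H i j * y j) * (∑ i, ∑ j, b i * A i j * y j)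
            * (∑ i, ∑ j, A i j * y i * y j)
        + ((∑ i, ∑ j, W i * H i j * W j) - 1) * (∑ i, ∑ j, A i j * y i * y j) ^ 2 = 0) :
    (∑ i, ∑ j, W i * H i j * W j) = 1 ∧
    ∀ y : Fin n → ℝ, 2 * (∑ i, ∑ j, W i * H i j * y j)
      = Real.exp (2 * ρ) * (∑ i, ∑ j, b i * A i j * y j) := by
  set e := Real.exp (2 * ρ) with he
  -- rewrite the H-quadratic form
  have hHQ : ∀ y : Fin n → ℝ, (∑ i, ∑ j, H i j * y i * y j) = e * Qf n A y := by
    intro y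
    rw [Qf, Finset.mul_sum]
    refine Finset.sum_congr rfl fun i _ => ?_
    rw [Finset.mul_sum]
    exact Finset.sum_congr rfl fun j _ => by rw [hconf]; ring
  have hc : (∑ i, ∑ j, W i * H i j * W j) = Lf n H W W := rfl
  set c : ℝ := Lf n H W W with hcdef
  -- key rewritten: Qf y * P y = 0
  have hkey : ∀ y : Fin n → ℝ, Qf n A y *
      (e * (Lf n A b y) ^ 2 - 2 * Lf n H W y * Lf n A b y + (c - 1) * Qf n A y) = 0 := by
    intro y
    have h := key y
    rw [hHQ y] at h
    have hβ : (∑ i, ∑ j, b i * A i j * y j) = Lf n A b y := rfl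
    have hW : (∑ i, ∑ j, W i * H i j * y j) = Lf n H W y := rfl
    have hq : (∑ i, ∑ j, A i j * y i * y j) = Qf n A y := rfl
    rw [hβ, hW, hq, hc] at h
    linear_combination h
  have hP : ∀ y : Fin n → ℝ, y ≠ 0 →
      e * (Lf n A b y) ^ 2 - 2 * Lf n H W y * Lf n A b y + (c - 1) * Qf n A y = 0 := by
    intro y hy
    have := hkey y
    rcases mul_eq_zero.mp this with h | h
    · exact absurd h (ne_of_gt (Qf_pos n A hA hy))
    · exact h
  -- the vector v with Lf n A b y = ∑ j, v j * y j
  set v : Fin n → ℝ := fun j => ∑ i, b i * A i j with hv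
  have hLv : ∀ y : Fin n → ℝ, Lf n A b y = ∑ j, v j * y j := by
    intro y
    rw [Lf, Finset.sum_comm]
    exact Finset.sum_congr rfl fun j _ => by rw [Finset.sum_mul]
  have hbb : 0 < Lf n A b b := by rw [Lf_self]; exact Qf_pos n A hA hb
  have hvne : v ≠ 0 := by
    intro h
    rw [hLv b, h] at hbb
    simp at hbb
  obtain ⟨i0, hi0⟩ := Function.ne_iff.mp hvne
  haveI : Nontrivial (Fin n) := Fin.nontrivial_iff_two_le.mpr hn
  obtain ⟨j0, hj0⟩ := exists_ne i0
  simp only [Pi.zero_apply] at hi0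
  -- construct y₀ with β y₀ = 0
  set y0 : Fin n → ℝ := fun k => if k = j0 then v i0 else if k = i0 then -(v j0) else 0 with hy0
  have hy0ne : y0 ≠ 0 := by
    intro h
    have := congrFun h j0
    simp [hy0] at this
    exact hi0 this
  have hβy0 : Lf n A b y0 = 0 := by
    rw [hLv]
    have : ∀ k, v k * y0 k = (if k = j0 then v j0 * v i0 else 0)
        + (if k = i0 then -(v i0 * v j0) else 0) := by
      intro k
      by_cases h1 : k = j0
      · subst h1; simp [hy0, hj0]
      · by_cases h2 : k = i0
        · subst h2; simp [hy0, h1]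
        · simp [hy0, h1, h2]
    simp only [this, Finset.sum_add_distrib, Finset.sum_ite_eq', Finset.mem_univ, if_true]
    ring
  have hc1 : c = 1 := by
    have h := hP y0 hy0ne
    rw [hβy0] at h
    have hq := Qf_pos n A hA hy0ne
    have : (c - 1) * Qf n A y0 = 0 := by linarith
    rcases mul_eq_zero.mp this with h' | h'
    · linarith
    · exact absurd h' (ne_of_gt hq)
  -- from c = 1 : β y * (e β y - 2 W₀ y) = 0 for y ≠ 0
  have hP1 : ∀ y : Fin n → ℝ, y ≠ 0 → Lf n A b y * (e * Lf n A b y - 2 * Lf n H W y) = 0 := by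
    intro y hy
    have h := hP y hy
    rw [hc1] at h
    linear_combination h
  have hWb : 2 * Lf n H W b = e * Lf n A b b := by
    have h := hP1 b hb
    rcases mul_eq_zero.mp h with h' | h'
    · exact absurd h' (ne_of_gt hbb)
    · linarith
  have main : ∀ y : Fin n → ℝ, 2 * Lf n H W y = e * Lf n A b y := by
    intro y
    by_cases hy : y = 0
    · subst hy; simp [Lf_zero]
    by_cases hβ : Lf n A b y = 0
    · -- use y + b
      have hyb : Lf n A b (y + b) = Lf n A b b := by rw [Lf_add, hβ, zero_add]
      have hybne : y + b ≠ 0 := by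
        intro h
        have : Lf n A b (y + b) = 0 := by rw [h, Lf_zero]
        rw [hyb] at this
        exact ne_of_gt hbb this
      have h := hP1 (y + b) hybne
      rw [hyb, Lf_add] at h
      rcases mul_eq_zero.mp h with h' | h'
      · exact absurd h' (ne_of_gt hbb)
      · rw [hβ]
        have : Lf n H W y = 0 := by linarith
        rw [this]; ring
    · have h := hP1 y hy
      rcases mul_eq_zero.mp h with h' | h'
      · exact absurd h' hβ
      · linarith
  exact ⟨hc1, fun y => main y⟩
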